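/- Orthogonal tensors preserve the tensor Frobenius norm under the t-product: if Q is an orthogonal n1×n1×n3 tensor (Qᵀ' * Q = I) and A is any n1×n2×n3 tensor, then ‖Q * A‖_F = ‖A‖_F. -/

import Mathlib

open Finset Complex
open scoped ComplexOrder

/-- The root `ζ = exp(-2πi/n)` used in the mode-3 DFT. -/
noncomputable def dftRoot (n : ℕ) : ℂ := Complex.exp (-2 * Real.pi * Complex.I / n)

/-- Mode-3 DFT of a third-order tensor: `Â(i,j,ω) = ∑ k, A(i,j,k) ζ^{ωk}`. -/
noncomputable def dft3 {n1 n2 n3 : ℕ} [NeZero n3]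
    (A : Fin n1 → Fin n2 → ZMod n3 → ℂ) (i : Fin n1) (j : Fin n2) (w : ZMod n3) : ℂ :=
  ∑ k : ZMod n3, A i j k * dftRoot n3 ^ (w * k).val

/-- t-product of third-order complex tensors via circular convolution of tubes. -/
noncomputable def tProdC {n1 n2 n4 n3 : ℕ} [NeZero n3]
    (A : Fin n1 → Fin n2 → ZMod n3 → ℂ) (B : Fin n2 → Fin n4 → ZMod n3 → ℂ) :
    Fin n1 → Fin n4 → ZMod n3 → ℂ :=
  fun i j t => ∑ k : Fin n2, ∑ s : ZMod n3, A i k s * B k j (t - s)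

/-- Conjugate tensor transpose: `Aᵀ'(i,j,k) = conj (A(j,i,-k))`. -/
noncomputable def ctT {n1 n2 n3 : ℕ} (A : Fin n1 → Fin n2 → ZMod n3 → ℂ) :
    Fin n2 → Fin n1 → ZMod n3 → ℂ :=
  fun i j k => starRingEnd ℂ (A j i (-k))

/-- The identity tensor: `I(i,i,0) = 1` and zero elsewhere. -/
noncomputable def idTC (n n3 : ℕ) : Fin n → Fin n → ZMod n3 → ℂ :=
  fun i j k => if i = j ∧ k = 0 then 1 else 0

/-- A tensor `Q` is orthogonal if `Qᵀ' * Q = Q * Qᵀ' = I` in the t-product sense. -/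
noncomputable def IsOrthT {n n3 : ℕ} [NeZero n3] (Q : Fin n → Fin n → ZMod n3 → ℂ) : Prop :=
  tProdC (ctT Q) Q = idTC n n3 ∧ tProdC Q (ctT Q) = idTC n n3

/-- The `ω`-th frontal slice of the mode-3 DFT of a tensor. -/
noncomputable def sliceDFT {n1 n2 n3 : ℕ} [NeZero n3]
    (A : Fin n1 → Fin n2 → ZMod n3 → ℂ) (w : ZMod n3) : Matrix (Fin n1) (Fin n2) ℂ :=
  Matrix.of fun i j => dft3 A i j w

/-- Squared Frobenius norm of a third-order tensor. -/
noncomputable def frob2 {n1 n2 n3 : ℕ} [NeZero n3]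
    (A : Fin n1 → Fin n2 → ZMod n3 → ℂ) : ℝ :=
  ∑ i : Fin n1, ∑ j : Fin n2, ∑ k : ZMod n3, ‖A i j k‖ ^ 2

/-- Nuclear norm of a matrix: sum of singular values, i.e. `Re (trace √(Mᴴ M))`. -/
noncomputable def nuclearNorm {m n : Type*} [Fintype m] [Fintype n] [DecidableEq n]
    (M : Matrix m n ℂ) : ℝ :=
  ((Matrix.posSemidef_conjTranspose_mul_self M).1.eigenvectorUnitary.1 *
    Matrix.diagonal ((fun x : ℝ => ((Real.sqrt x : ℝ) : ℂ)) ∘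
      (Matrix.posSemidef_conjTranspose_mul_self M).1.eigenvalues) *
    (star (Matrix.posSemidef_conjTranspose_mul_self M).1.eigenvectorUnitary : Matrix n n ℂ)).trace.re
section Aux

variable {n3 : ℕ} [NeZero n3]

lemma dftRoot_prim : IsPrimitiveRoot (dftRoot n3) n3 := by
  have h : dftRoot n3 = (Complex.exp (2 * Real.pi * Complex.I / n3))⁻¹ := by
    rw [dftRoot, ← Complex.exp_neg]; ring_nf
  rw [h]
  exact (Complex.isPrimitiveRoot_exp n3 (NeZero.ne n3)).inv

lemma dftRoot_pow_self : dftRoot n3 ^ n3 = 1 := dftRoot_prim.pow_eq_one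

/-- Character `E a = ζ^{a.val}`. -/
noncomputable def E (n3 : ℕ) [NeZero n3] (a : ZMod n3) : ℂ := dftRoot n3 ^ a.val

lemma E_pow_mod (m : ℕ) : dftRoot n3 ^ (m % n3) = dftRoot n3 ^ m := by
  conv_rhs => rw [← Nat.mod_add_div m n3]
  rw [pow_add, pow_mul, dftRoot_pow_self, one_pow, mul_one]

lemma E_natCast (m : ℕ) : E n3 (m : ZMod n3) = dftRoot n3 ^ m := by
  rw [E, ZMod.val_natCast, E_pow_mod]

lemma E_zero : E n3 0 = 1 := by
  simpa using E_natCast (n3 := n3) 0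

lemma E_add (a b : ZMod n3) : E n3 (a + b) = E n3 a * E n3 b := by
  have h : a + b = ((a.val + b.val : ℕ) : ZMod n3) := by
    rw [Nat.cast_add, ZMod.natCast_rightInverse a, ZMod.natCast_rightInverse b]
  rw [h, E_natCast, pow_add, E, E]

lemma E_conj (a : ZMod n3) : starRingEnd ℂ (E n3 a) = E n3 (-a) := by
  have h1 : E n3 a * E n3 (-a) = 1 := by rw [← E_add, add_neg_cancel, E_zero]
  have habs : ‖E n3 a‖ = 1 := by
    rw [E]
    have h2 : ‖dftRoot n3‖ = 1 := by
      rw [dftRoot]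
      have h3 : (-2 : ℂ) * Real.pi * Complex.I / n3
          = ((-2 * Real.pi / n3 : ℝ) : ℂ) * Complex.I := by
        push_cast; ring
      rw [h3, Complex.norm_exp_ofReal_mul_I]
    rw [norm_pow, h2, one_pow]
  have h2 : starRingEnd ℂ (E n3 a) * E n3 a = 1 := by
    rw [← Complex.normSq_eq_conj_mul_self, ← Complex.sq_norm, habs, one_pow, Complex.ofReal_one]
  calc starRingEnd ℂ (E n3 a) = starRingEnd ℂ (E n3 a) * (E n3 a * E n3 (-a)) := by
        rw [h1, mul_one]
    _ = E n3 (-a) := by rw [← mul_assoc, h2, one_mul]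

lemma E_mul_val (a : ZMod n3) : dftRoot n3 ^ a.val = E n3 a := rfl

/-- The key character sum. -/
lemma sum_E (c : ZMod n3) : ∑ k : ZMod n3, E n3 (c * k) = if c = 0 then (n3 : ℂ) else 0 := by
  by_cases hc : c = 0
  · simp [hc, E_zero, ZMod.card]
  · simp only [hc, if_false]
    have key : ∀ k : ZMod n3, E n3 (c * k) = (dftRoot n3 ^ c.val) ^ k.val := by
      intro k
      have h : c * k = ((c.val * k.val : ℕ) : ZMod n3) := by
        rw [Nat.cast_mul, ZMod.natCast_rightInverse c, ZMod.natCast_rightInverse k]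
      rw [h, E_natCast, pow_mul]
    simp only [key]
    have hreindex : ∑ k : ZMod n3, (dftRoot n3 ^ c.val) ^ k.val
        = ∑ i ∈ Finset.range n3, (dftRoot n3 ^ c.val) ^ i := by
      refine Finset.sum_nbij' (fun k => k.val) (fun i => (i : ZMod n3)) ?_ ?_ ?_ ?_ ?_
      · intro k _; exact Finset.mem_range.2 (ZMod.val_lt k)
      · intro i _; exact Finset.mem_univ _
      · intro k _; exact ZMod.natCast_rightInverse k
      · intro i hi; exact ZMod.val_natCast_of_lt (Finset.mem_range.1 hi)
      · intro k _; rfl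
    rw [hreindex]
    have hne : dftRoot n3 ^ c.val ≠ 1 := by
      refine dftRoot_prim.pow_ne_one_of_pos_of_lt ?_ (ZMod.val_lt c)
      refine (fun h => hc ?_)
      have h2 := ZMod.natCast_rightInverse (n := n3) c
      rw [← h2, h, Nat.cast_zero]
    have hpow : (dftRoot n3 ^ c.val) ^ n3 = 1 := by
      rw [← pow_mul, mul_comm, pow_mul, dftRoot_pow_self, one_pow]
    have hg := geom_sum_mul (dftRoot n3 ^ c.val) n3
    rw [hpow, sub_self] at hg
    exact (mul_eq_zero.1 hg).resolve_right (sub_ne_zero.2 hne)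

variable {n1 n2 n4 : ℕ}

/-- Convolution theorem. -/
lemma dft3_tProdC (A : Fin n1 → Fin n2 → ZMod n3 → ℂ) (B : Fin n2 → Fin n4 → ZMod n3 → ℂ)
    (i : Fin n1) (j : Fin n4) (w : ZMod n3) :
    dft3 (tProdC A B) i j w = ∑ k : Fin n2, dft3 A i k w * dft3 B k j w := by
  have key : ∀ k : Fin n2, dft3 A i k w * dft3 B k j w
      = ∑ t : ZMod n3, (∑ s : ZMod n3, A i k s * B k j (t - s)) * E n3 (w * t) := by
    intro k
    calc dft3 A i k w * dft3 B k j w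
        = ∑ s : ZMod n3, ∑ u : ZMod n3,
            (A i k s * E n3 (w * s)) * (B k j u * E n3 (w * u)) := by
          rw [dft3, dft3, Fintype.sum_mul_sum]
          rfl
      _ = ∑ s : ZMod n3, ∑ t : ZMod n3, A i k s * B k j (t - s) * E n3 (w * t) := by
          refine Finset.sum_congr rfl fun s _ => ?_
          refine Fintype.sum_equiv (Equiv.addRight s) _ _ fun u => ?_
          have he : (Equiv.addRight s) u = u + s := rfl
          rw [he, add_sub_cancel_right]
          have h : w * (u + s) = w * s + w * u := by ring
          rw [h, E_add]
          ring
      _ = ∑ t : ZMod n3, ∑ s : ZMod n3, A i k s * B k j (t - s) * E n3 (w * t) :=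
          Finset.sum_comm
      _ = ∑ t : ZMod n3, (∑ s : ZMod n3, A i k s * B k j (t - s)) * E n3 (w * t) :=
          Finset.sum_congr rfl fun t _ => (Finset.sum_mul _ _ _).symm
  rw [Finset.sum_congr rfl fun k _ => key k]
  rw [dft3]
  simp only [tProdC, Finset.sum_mul, E_mul_val]
  rw [Finset.sum_comm]

lemma dft3_ctT (Q : Fin n1 → Fin n2 → ZMod n3 → ℂ) (i : Fin n2) (j : Fin n1) (w : ZMod n3) :
    dft3 (ctT Q) i j w = starRingEnd ℂ (dft3 Q j i w) := by
  rw [dft3, dft3, map_sum]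
  refine Fintype.sum_equiv (Equiv.neg (ZMod n3)) _ _ fun k => ?_
  simp only [Equiv.neg_apply, ctT, map_mul, E_mul_val, E_conj]
  have h : -(w * -k) = w * k := by ring
  rw [h]

lemma dft3_idTC (n : ℕ) (i j : Fin n) (w : ZMod n3) :
    dft3 (idTC n n3) i j w = if i = j then 1 else 0 := by
  simp only [dft3, idTC, E_mul_val]
  rw [Finset.sum_eq_single 0]
  · by_cases h : i = j <;> simp [h, E_zero]
  · intro k _ hk
    simp [hk]
  · simp

/-- Unitarity of the DFT slices of an orthogonal tensor. -/
lemma slice_unitary (Q : Fin n1 → Fin n1 → ZMod n3 → ℂ)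
    (hQ : tProdC (ctT Q) Q = idTC n1 n3) (a b : Fin n1) (w : ZMod n3) :
    ∑ i : Fin n1, starRingEnd ℂ (dft3 Q i a w) * dft3 Q i b w = if a = b then 1 else 0 := by
  have h := congrArg (fun T => dft3 T a b w) hQ
  rw [dft3_tProdC, dft3_idTC] at h
  rw [← h]
  exact Finset.sum_congr rfl fun i _ => by rw [dft3_ctT]

/-- Parseval for a single tube. -/
lemma parseval_tube (f : ZMod n3 → ℂ) :
    ∑ w : ZMod n3, starRingEnd ℂ (∑ k : ZMod n3, f k * E n3 (w * k)) *
      (∑ k : ZMod n3, f k * E n3 (w * k))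
    = (n3 : ℂ) * ∑ k : ZMod n3, starRingEnd ℂ (f k) * f k := by
  have step1 : ∀ w : ZMod n3,
      starRingEnd ℂ (∑ k : ZMod n3, f k * E n3 (w * k)) * (∑ k : ZMod n3, f k * E n3 (w * k))
      = ∑ k : ZMod n3, ∑ k' : ZMod n3, starRingEnd ℂ (f k) * f k' * E n3 (w * (k' - k)) := by
    intro w
    rw [map_sum, Fintype.sum_mul_sum]
    refine Finset.sum_congr rfl fun k _ => Finset.sum_congr rfl fun k' _ => ?_
    rw [map_mul, E_conj]
    have h : w * (k' - k) = -(w * k) + w * k' := by ring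
    rw [h, E_add]
    ring
  calc ∑ w : ZMod n3, starRingEnd ℂ (∑ k : ZMod n3, f k * E n3 (w * k)) *
        (∑ k : ZMod n3, f k * E n3 (w * k))
      = ∑ w : ZMod n3, ∑ k : ZMod n3, ∑ k' : ZMod n3,
          starRingEnd ℂ (f k) * f k' * E n3 (w * (k' - k)) :=
        Finset.sum_congr rfl fun w _ => step1 w
    _ = ∑ k : ZMod n3, ∑ k' : ZMod n3, ∑ w : ZMod n3,
          starRingEnd ℂ (f k) * f k' * E n3 (w * (k' - k)) := by
        rw [Finset.sum_comm]
        exact Finset.sum_congr rfl fun k _ => Finset.sum_comm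
    _ = ∑ k : ZMod n3, ∑ k' : ZMod n3,
          starRingEnd ℂ (f k) * f k' * (if k' - k = 0 then (n3 : ℂ) else 0) := by
        refine Finset.sum_congr rfl fun k _ => Finset.sum_congr rfl fun k' _ => ?_
        rw [← Finset.mul_sum, ← sum_E (k' - k)]
        exact congrArg _ (Finset.sum_congr rfl fun w _ => by rw [mul_comm w (k' - k)])
    _ = ∑ k : ZMod n3, starRingEnd ℂ (f k) * f k * (n3 : ℂ) := by
        refine Finset.sum_congr rfl fun k _ => ?_
        rw [Finset.sum_eq_single k]
        · rw [sub_self, if_pos rfl]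
        · intro k' _ hk'
          rw [if_neg (fun h => hk' (by rwa [sub_eq_zero] at h)), mul_zero]
        · intro h; exact absurd (Finset.mem_univ k) h
    _ = (n3 : ℂ) * ∑ k : ZMod n3, starRingEnd ℂ (f k) * f k := by
        rw [Finset.mul_sum]
        exact Finset.sum_congr rfl fun k _ => by ring

/-- Frobenius norm squared via conjugates, complex version. -/
lemma frob2_eq_re (A : Fin n1 → Fin n2 → ZMod n3 → ℂ) :
    (frob2 A : ℂ) = ∑ i : Fin n1, ∑ j : Fin n2, ∑ k : ZMod n3,
      starRingEnd ℂ (A i j k) * A i j k := by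
  rw [frob2]
  push_cast
  refine Finset.sum_congr rfl fun i _ => Finset.sum_congr rfl fun j _ =>
    Finset.sum_congr rfl fun k _ => ?_
  rw [← Complex.normSq_eq_conj_mul_self, ← Complex.sq_norm]
  push_cast
  ring

/-- Parseval for tensors. -/
lemma frob2_parseval (A : Fin n1 → Fin n2 → ZMod n3 → ℂ) :
    ∑ w : ZMod n3, ∑ i : Fin n1, ∑ j : Fin n2,
      starRingEnd ℂ (dft3 A i j w) * dft3 A i j w = (n3 : ℂ) * (frob2 A : ℂ) := by
  rw [frob2_eq_re, Finset.mul_sum]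
  rw [Finset.sum_comm]
  refine Finset.sum_congr rfl fun i _ => ?_
  rw [Finset.sum_comm, Finset.mul_sum]
  refine Finset.sum_congr rfl fun j _ => ?_
  simpa only [dft3, E_mul_val] using parseval_tube (f := fun k => A i j k)

end Aux

/-- Orthogonal tensors preserve the Frobenius norm under the t-product:
if `Qᵀ' * Q = I` then `‖Q * A‖_F = ‖A‖_F`. -/
theorem frobNorm_tProdC_orth {n1 n2 n3 : ℕ} [NeZero n3]
    (Q : Fin n1 → Fin n1 → ZMod n3 → ℂ) (A : Fin n1 → Fin n2 → ZMod n3 → ℂ)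
    (hQ : tProdC (ctT Q) Q = idTC n1 n3) :
    Real.sqrt (frob2 (tProdC Q A)) = Real.sqrt (frob2 A) := by
  have hper : ∀ w : ZMod n3,
      ∑ i : Fin n1, ∑ j : Fin n2,
        starRingEnd ℂ (dft3 (tProdC Q A) i j w) * dft3 (tProdC Q A) i j w
      = ∑ i : Fin n1, ∑ j : Fin n2, starRingEnd ℂ (dft3 A i j w) * dft3 A i j w := by
    intro w
    have stepA : ∀ (i : Fin n1) (j : Fin n2),
        starRingEnd ℂ (dft3 (tProdC Q A) i j w) * dft3 (tProdC Q A) i j w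
        = ∑ a : Fin n1, ∑ b : Fin n1,
            starRingEnd ℂ (dft3 Q i a w) * dft3 Q i b w *
              (starRingEnd ℂ (dft3 A a j w) * dft3 A b j w) := by
      intro i j
      rw [dft3_tProdC, map_sum, Fintype.sum_mul_sum]
      refine Finset.sum_congr rfl fun a _ => Finset.sum_congr rfl fun b _ => ?_
      rw [map_mul]
      ring
    calc ∑ i : Fin n1, ∑ j : Fin n2,
          starRingEnd ℂ (dft3 (tProdC Q A) i j w) * dft3 (tProdC Q A) i j w
        = ∑ i : Fin n1, ∑ j : Fin n2, ∑ a : Fin n1, ∑ b : Fin n1,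
            starRingEnd ℂ (dft3 Q i a w) * dft3 Q i b w *
              (starRingEnd ℂ (dft3 A a j w) * dft3 A b j w) :=
          Finset.sum_congr rfl fun i _ => Finset.sum_congr rfl fun j _ => stepA i j
      _ = ∑ j : Fin n2, ∑ a : Fin n1, ∑ b : Fin n1, ∑ i : Fin n1,
            starRingEnd ℂ (dft3 Q i a w) * dft3 Q i b w *
              (starRingEnd ℂ (dft3 A a j w) * dft3 A b j w) := by
          rw [Finset.sum_comm]
          refine Finset.sum_congr rfl fun j _ => ?_
          rw [Finset.sum_comm]
          exact Finset.sum_congr rfl fun a _ => Finset.sum_comm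
      _ = ∑ j : Fin n2, ∑ a : Fin n1, ∑ b : Fin n1,
            (if a = b then (1 : ℂ) else 0) *
              (starRingEnd ℂ (dft3 A a j w) * dft3 A b j w) := by
          refine Finset.sum_congr rfl fun j _ => Finset.sum_congr rfl fun a _ =>
            Finset.sum_congr rfl fun b _ => ?_
          rw [← Finset.sum_mul, slice_unitary Q hQ a b w]
      _ = ∑ j : Fin n2, ∑ a : Fin n1, starRingEnd ℂ (dft3 A a j w) * dft3 A a j w := by
          refine Finset.sum_congr rfl fun j _ => Finset.sum_congr rfl fun a _ => ?_
          rw [Finset.sum_eq_single a]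
          · rw [if_pos rfl, one_mul]
          · intro b _ hb
            rw [if_neg (fun h => hb h.symm), zero_mul]
          · intro h; exact absurd (Finset.mem_univ a) h
      _ = ∑ a : Fin n1, ∑ j : Fin n2, starRingEnd ℂ (dft3 A a j w) * dft3 A a j w :=
          Finset.sum_comm
  have hc : (n3 : ℂ) * (frob2 (tProdC Q A) : ℂ) = (n3 : ℂ) * (frob2 A : ℂ) := by
    rw [← frob2_parseval, ← frob2_parseval]
    exact Finset.sum_congr rfl fun w _ => hper w
  have hn : (n3 : ℂ) ≠ 0 := Nat.cast_ne_zero.2 (NeZero.ne n3)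
  have hfr : frob2 (tProdC Q A) = frob2 A := by
    have := mul_left_cancel₀ hn hc
    exact_mod_cast this
  rw [hfr]
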